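/- Let F : ℝ → ℂ be continuous with compact support, and define f : ℝ → ℂ by the inversion formula f(x) = (1/√(2π)) ∫_ℝ F(k) e^{-ikx} dk. Then f is differentiable and for every x ∈ ℝ, for all sufficiently small Δ > 0 the series Σ_{s=1}^∞ (-1)^{s-1} (f(x+Δs) − f(x−Δs))/(Δs) converges (as a limit of partial sums), and its sum tends to f'(x) as Δ → 0⁺; that is, 𝔻(f)(x) = f'(x) for every function f whose Fourier transform has compact support. -/

import Mathlib

set_option maxHeartbeats 1000000

open Filter Finset MeasureTheory Complex Real Topology

/-! ### Auxiliary lemmas -/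

lemma one_add_exp_ne (t : ℝ) (h : Real.cos t ≠ -1) : (1 : ℂ) + Complex.exp (t * Complex.I) ≠ 0 := by
  intro hz
  have := congrArg Complex.re hz
  simp [Complex.exp_ofReal_mul_I_re] at this
  exact h (by linarith)

noncomputable def ker (N : ℕ) (t : ℝ) : ℝ :=
  (Complex.exp (((((N:ℝ)+1) * t : ℝ)) * Complex.I) / (1 + Complex.exp ((t:ℝ) * Complex.I))).re

lemma abs_le_of_uIcc {θ : ℝ} (hθ : |θ| ≤ π/2) : ∀ t ∈ Set.uIcc (0:ℝ) θ, |t| ≤ π/2 := by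
  intro t ht
  rw [Set.uIcc_eq_union] at ht
  rcases abs_le.1 hθ with ⟨hl, hr⟩
  rcases ht with h' | h' <;>
    · rcases h' with ⟨h1, h2⟩; rw [abs_le]; constructor <;> nlinarith [Real.pi_pos]

lemma cos_ne_on (θ : ℝ) (hθ : |θ| ≤ π/2) : ∀ t ∈ Set.uIcc (0:ℝ) θ, Real.cos t ≠ -1 := by
  intro t ht
  have h1 : |t| ≤ π/2 := abs_le_of_uIcc hθ t ht
  have : 0 ≤ Real.cos t := Real.cos_nonneg_of_mem_Icc ⟨by linarith [abs_le.1 h1 |>.1], (abs_le.1 h1).2⟩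
  linarith

lemma ker_contOn (N : ℕ) {s : Set ℝ} (hs : ∀ t ∈ s, Real.cos t ≠ -1) :
    ContinuousOn (ker N) s := by
  apply Complex.continuous_re.comp_continuousOn
  apply ContinuousOn.div
  · exact (Complex.continuous_exp.comp (by continuity)).continuousOn
  · exact (by continuity : Continuous fun t : ℝ => (1:ℂ) + Complex.exp ((t:ℝ) * Complex.I)).continuousOn
  · exact fun t ht => one_add_exp_ne t (hs t ht)

lemma ker_bound (N : ℕ) (t : ℝ) (ht : |t| ≤ π/2) : |ker N t| ≤ 1 := by
  have hc : 0 ≤ Real.cos t :=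
    Real.cos_nonneg_of_mem_Icc ⟨by linarith [abs_le.1 ht |>.1], (abs_le.1 ht).2⟩
  have h1 : (1:ℝ) ≤ ‖(1:ℂ) + Complex.exp ((t:ℝ) * Complex.I)‖ := by
    calc (1:ℝ) ≤ ((1:ℂ) + Complex.exp ((t:ℝ) * Complex.I)).re := by
          simp [Complex.exp_ofReal_mul_I_re]; linarith
      _ ≤ ‖(1:ℂ) + Complex.exp ((t:ℝ) * Complex.I)‖ := Complex.re_le_norm _
  have h2 : ‖Complex.exp (((((N:ℝ)+1) * t : ℝ)) * Complex.I)‖ = 1 := by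
    rw [Complex.norm_exp]
    simp
  calc |ker N t| ≤ ‖Complex.exp (((((N:ℝ)+1) * t : ℝ)) * Complex.I) / (1 + Complex.exp ((t:ℝ) * Complex.I))‖ :=
        Complex.abs_re_le_norm _
    _ = 1 / ‖(1:ℂ) + Complex.exp ((t:ℝ) * Complex.I)‖ := by rw [norm_div, h2]
    _ ≤ 1 := by rw [div_le_one (by linarith)]; exact h1

lemma re_half (t : ℝ) (h : Real.cos t ≠ -1) :
    (Complex.exp (t * Complex.I) / (1 + Complex.exp (t * Complex.I))).re = 1/2 := by
  rw [Complex.exp_mul_I]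
  have hne : ((1:ℂ) + (Complex.cos t + Complex.sin t * Complex.I)) ≠ 0 := by
    intro hz
    have := congrArg Complex.re hz
    simp [Complex.cos_ofReal_re] at this
    exact h (by linarith)
  rw [Complex.div_re]
  simp only [Complex.add_re, Complex.add_im, Complex.one_re, Complex.one_im, Complex.mul_re,
    Complex.mul_im, Complex.I_re, Complex.I_im, Complex.cos_ofReal_re, Complex.sin_ofReal_re,
    Complex.cos_ofReal_im, Complex.sin_ofReal_im, Complex.normSq_apply]
  have h1 : Real.sin t ^ 2 + Real.cos t ^ 2 = 1 := Real.sin_sq_add_cos_sq t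
  have h2 : (1 + Real.cos t) ≠ 0 := fun hz => h (by linarith)
  have h3 : 0 < 1 + Real.cos t := by
    rcases lt_or_eq_of_le (Real.neg_one_le_cos t) with h' | h'
    · linarith
    · exact absurd h'.symm h
  rw [← add_div, div_eq_iff (by nlinarith)]
  nlinarith

lemma kernel_sum_c (t : ℝ) (h : Real.cos t ≠ -1) (N : ℕ) :
    (∑ n ∈ Finset.range N, (((-1:ℝ)^n : ℝ) : ℂ) * Complex.exp (((((n:ℝ)+1) * t : ℝ)) * Complex.I))
      = Complex.exp (t * Complex.I) / (1 + Complex.exp (t * Complex.I))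
        + (((-1:ℝ)^(N+1) : ℝ) : ℂ) * (Complex.exp (((((N:ℝ)+1) * t : ℝ)) * Complex.I) / (1 + Complex.exp (t * Complex.I))) := by
  set e := Complex.exp (t * Complex.I) with he
  have hne : 1 + e ≠ 0 := by
    intro hz
    have := congrArg Complex.re hz
    simp [he, Complex.exp_ofReal_mul_I_re] at this
    exact h (by linarith)
  have hw : (-e) ≠ 1 := by
    intro hz
    have he1 : e = -1 := by linear_combination -hz
    have := congrArg Complex.re he1
    simp [he, Complex.exp_ofReal_mul_I_re] at this
    exact h this
  have hexp : ∀ n : ℕ, Complex.exp (((((n:ℝ)+1) * t : ℝ)) * Complex.I) = e ^ (n+1) := by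
    intro n
    rw [he, ← Complex.exp_nat_mul]
    congr 1
    push_cast
    ring
  have hterm : ∀ n : ℕ, (((-1:ℝ)^n : ℝ) : ℂ) * Complex.exp (((((n:ℝ)+1) * t : ℝ)) * Complex.I)
      = e * (-e)^n := by
    intro n
    rw [hexp n, neg_pow, pow_succ]
    push_cast
    ring
  calc (∑ n ∈ Finset.range N, (((-1:ℝ)^n : ℝ) : ℂ) * Complex.exp (((((n:ℝ)+1) * t : ℝ)) * Complex.I))
      = ∑ n ∈ Finset.range N, e * (-e)^n := Finset.sum_congr rfl fun n _ => hterm n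
    _ = e * (((-e)^N - 1)/((-e) - 1)) := by rw [← Finset.mul_sum, geom_sum_eq hw]
    _ = _ := by
        rw [hexp N, neg_pow]
        have h2 : (-e) - 1 ≠ 0 := fun hz => hw (by linear_combination hz)
        field_simp
        push_cast
        ring

lemma kernel_sum_re (t : ℝ) (h : Real.cos t ≠ -1) (N : ℕ) :
    ∑ n ∈ Finset.range N, (-1:ℝ)^n * Real.cos (((n:ℝ)+1) * t)
      = 1/2 + (-1:ℝ)^(N+1) * ker N t := by
  have := congrArg Complex.re (kernel_sum_c t h N)
  rw [Complex.re_sum] at this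
  simp only [Complex.re_ofReal_mul, Complex.exp_ofReal_mul_I_re] at this
  rw [this, Complex.add_re, re_half t h, Complex.re_ofReal_mul]
  rfl

lemma partial_sum_eq (θ : ℝ) (hθ : |θ| ≤ π/2) (N : ℕ) :
    ∑ n ∈ Finset.range N, (-1:ℝ)^n * Real.sin (((n:ℝ)+1) * θ) / ((n:ℝ)+1)
      = θ/2 + (-1:ℝ)^(N+1) * ∫ t in (0:ℝ)..θ, ker N t := by
  have hcos := cos_ne_on θ hθ
  have hterm : ∀ n : ℕ, (-1:ℝ)^n * Real.sin (((n:ℝ)+1) * θ) / ((n:ℝ)+1)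
      = ∫ t in (0:ℝ)..θ, (-1:ℝ)^n * Real.cos (((n:ℝ)+1) * t) := by
    intro n
    have hc : ((n:ℝ)+1) ≠ 0 := by positivity
    rw [intervalIntegral.integral_const_mul, intervalIntegral.integral_comp_mul_left Real.cos hc,
      integral_cos]
    simp [smul_eq_mul]
    ring
  have hki : IntervalIntegrable (ker N) volume 0 θ :=
    (ker_contOn N hcos).intervalIntegrable
  calc ∑ n ∈ Finset.range N, (-1:ℝ)^n * Real.sin (((n:ℝ)+1) * θ) / ((n:ℝ)+1)
      = ∑ n ∈ Finset.range N, ∫ t in (0:ℝ)..θ, (-1:ℝ)^n * Real.cos (((n:ℝ)+1) * t) :=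
        Finset.sum_congr rfl fun n _ => hterm n
    _ = ∫ t in (0:ℝ)..θ, ∑ n ∈ Finset.range N, (-1:ℝ)^n * Real.cos (((n:ℝ)+1) * t) := by
        rw [intervalIntegral.integral_finset_sum]
        intro n _
        exact (Continuous.intervalIntegrable (by continuity) _ _)
    _ = ∫ t in (0:ℝ)..θ, (1/2 + (-1:ℝ)^(N+1) * ker N t) := by
        apply intervalIntegral.integral_congr
        intro t ht
        exact kernel_sum_re t (hcos t ht) N
    _ = θ/2 + (-1:ℝ)^(N+1) * ∫ t in (0:ℝ)..θ, ker N t := by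
        rw [intervalIntegral.integral_add (intervalIntegrable_const) (hki.const_mul _),
          intervalIntegral.integral_const_mul, intervalIntegral.integral_const]
        simp
        ring

lemma ker_integral_tendsto (θ : ℝ) (hθ : |θ| ≤ π/2) :
    Tendsto (fun N : ℕ => ∫ t in (0:ℝ)..θ, ker N t) atTop (𝓝 0) := by
  have hcos := cos_ne_on θ hθ
  set g : ℝ → ℂ := Set.uIoc (0:ℝ) θ |>.indicator (fun t => ((1:ℂ) + Complex.exp ((t:ℝ) * Complex.I))⁻¹) with hg
  set w : ℕ → ℝ := fun N => -(((N:ℝ)+1)/(2*π)) with hw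
  have hwt : Tendsto w atTop (cocompact ℝ) := by
    have h1 : Tendsto (fun N:ℕ => ((N:ℝ)+1)/(2*π)) atTop atTop :=
      (tendsto_atTop_add_const_right _ 1 tendsto_natCast_atTop_atTop).atTop_div_const
        (by positivity)
    have h2 : Tendsto w atTop atBot := tendsto_neg_atBot_iff.2 h1
    rw [cocompact_eq_atBot_atTop]
    exact h2.mono_right le_sup_left
  have hRL := (Real.tendsto_integral_exp_smul_cocompact g).comp hwt
  have hker : ∀ t, Real.cos t ≠ -1 → ∀ N : ℕ,
      Complex.exp (((((N:ℝ)+1) * t : ℝ)) * Complex.I) / (1 + Complex.exp ((t:ℝ) * Complex.I))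
        = Complex.exp (((((N:ℝ)+1) * t : ℝ)) * Complex.I) * ((1:ℂ) + Complex.exp ((t:ℝ) * Complex.I))⁻¹ := by
    intro t ht N; rw [div_eq_mul_inv]
  have key : ∀ N : ℕ, (∫ v : ℝ, Real.fourierChar (-(v * w N)) • g v)
      = ∫ t in Set.uIoc (0:ℝ) θ,
          Complex.exp (((((N:ℝ)+1) * t : ℝ)) * Complex.I) * ((1:ℂ) + Complex.exp ((t:ℝ) * Complex.I))⁻¹ := by
    intro N
    rw [← MeasureTheory.integral_indicator measurableSet_uIoc]
    congr 1
    funext t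
    by_cases ht : t ∈ Set.uIoc (0:ℝ) θ
    · rw [Set.indicator_of_mem ht, hg, Set.indicator_of_mem ht, Circle.smul_def,
        Real.fourierChar_apply]
      have harg : 2 * π * -(t * w N) = ((N:ℝ)+1) * t := by
        simp only [hw]
        field_simp
      rw [harg, smul_eq_mul]
    · rw [Set.indicator_of_notMem ht, hg, Set.indicator_of_notMem ht, smul_zero]
  set K : ℕ → ℂ := fun N => ∫ t in (0:ℝ)..θ,
      Complex.exp (((((N:ℝ)+1) * t : ℝ)) * Complex.I) / (1 + Complex.exp ((t:ℝ) * Complex.I)) with hK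
  have hKt : Tendsto K atTop (𝓝 0) := by
    have : ∀ N : ℕ, K N = (if (0:ℝ) ≤ θ then (1:ℝ) else -1) • ∫ v : ℝ, Real.fourierChar (-(v * w N)) • g v := by
      intro N
      rw [key N]
      simp only [hK]
      rw [intervalIntegral.intervalIntegral_eq_integral_uIoc]
      refine congrArg (fun z : ℂ => (if (0:ℝ) ≤ θ then (1:ℝ) else -1) • z) ?_
      apply MeasureTheory.setIntegral_congr_fun measurableSet_uIoc
      intro t ht
      exact hker t (hcos t (Set.uIoc_subset_uIcc ht)) N
    rw [show (0:ℂ) = (if (0:ℝ) ≤ θ then (1:ℝ) else -1) • (0:ℂ) by simp]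
    simp only [funext this]
    exact hRL.const_smul _
  have hre : ∀ N : ℕ, (∫ t in (0:ℝ)..θ, ker N t) = (K N).re := by
    intro N
    have hint : IntervalIntegrable
        (fun t : ℝ => Complex.exp (((((N:ℝ)+1) * t : ℝ)) * Complex.I) / (1 + Complex.exp ((t:ℝ) * Complex.I)))
        volume 0 θ := by
      apply ContinuousOn.intervalIntegrable
      apply ContinuousOn.div
      · exact (Complex.continuous_exp.comp (by continuity)).continuousOn
      · exact (by continuity : Continuous fun t : ℝ => (1:ℂ) + Complex.exp ((t:ℝ) * Complex.I)).continuousOn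
      · exact fun t ht => one_add_exp_ne t (hcos t ht)
    have h2 := Complex.reCLM.intervalIntegral_comp_comm hint
    simp only [Complex.reCLM_apply] at h2
    rw [hK]
    exact h2
  simp only [funext hre]
  have := (Complex.continuous_re.tendsto 0).comp hKt
  rw [Complex.zero_re] at this
  exact this

lemma sin_series_tendsto (θ : ℝ) (hθ : |θ| ≤ π/2) :
    Tendsto (fun N : ℕ => ∑ n ∈ Finset.range N, (-1:ℝ)^n * Real.sin (((n:ℝ)+1) * θ) / ((n:ℝ)+1))
      atTop (𝓝 (θ/2)) := by
  simp only [funext (partial_sum_eq θ hθ)]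
  have h0 : Tendsto (fun N : ℕ => (-1:ℝ)^(N+1) * ∫ t in (0:ℝ)..θ, ker N t) atTop (𝓝 0) := by
    have hg : Tendsto (fun N : ℕ => |∫ t in (0:ℝ)..θ, ker N t|) atTop (𝓝 0) := by
      simpa using (ker_integral_tendsto θ hθ).abs
    apply squeeze_zero_norm _ hg
    intro N
    simp [Real.norm_eq_abs, abs_mul, _root_.abs_pow]
  have := tendsto_const_nhds.add h0 (f := fun _ : ℕ => θ/2) (x := atTop)
  simpa using this

lemma sin_series_bound (θ : ℝ) (hθ : |θ| ≤ π/2) (N : ℕ) :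
    |∑ n ∈ Finset.range N, (-1:ℝ)^n * Real.sin (((n:ℝ)+1) * θ) / ((n:ℝ)+1)| ≤ 3 := by
  rw [partial_sum_eq θ hθ N]
  have hJ : ‖∫ t in (0:ℝ)..θ, ker N t‖ ≤ 1 * |θ - 0| := by
    apply intervalIntegral.norm_integral_le_of_norm_le_const
    intro t ht
    have ht2 : |t| ≤ π/2 := abs_le_of_uIcc hθ t (Set.uIoc_subset_uIcc ht)
    simpa using ker_bound N t ht2
  have hπ : π ≤ 4 := Real.pi_le_four
  calc |θ/2 + (-1:ℝ)^(N+1) * ∫ t in (0:ℝ)..θ, ker N t|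
      ≤ |θ/2| + |(-1:ℝ)^(N+1) * ∫ t in (0:ℝ)..θ, ker N t| := abs_add_le _ _
    _ ≤ |θ|/2 + |∫ t in (0:ℝ)..θ, ker N t| := by
        rw [abs_mul, _root_.abs_pow, abs_neg, abs_one, one_pow, one_mul, abs_div]
        simp
    _ ≤ |θ|/2 + |θ| := by
        have := hJ
        rw [sub_zero, one_mul] at this
        simp only [Real.norm_eq_abs] at this
        linarith
    _ ≤ 3 := by linarith

lemma exp_diff_sin (k x r : ℝ) :
    Complex.exp (-Complex.I * k * ((x + r : ℝ) : ℂ)) - Complex.exp (-Complex.I * k * ((x - r : ℝ) : ℂ))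
      = Complex.exp (-Complex.I * k * (x:ℂ)) * (-2*Complex.I) * ((Real.sin (k * r) : ℝ) : ℂ) := by
  have e1 : -Complex.I * (k:ℂ) * ((x + r : ℝ) : ℂ)
      = (-Complex.I * k * (x:ℂ)) + (-(((k*r:ℝ):ℂ)) * Complex.I) := by push_cast; ring
  have e2 : -Complex.I * (k:ℂ) * ((x - r : ℝ) : ℂ)
      = (-Complex.I * k * (x:ℂ)) + ((((k*r:ℝ):ℂ)) * Complex.I) := by push_cast; ring
  rw [e1, e2, Complex.exp_add, Complex.exp_add, Complex.ofReal_sin]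
  have hs : Complex.sin ((k*r:ℝ):ℂ)
      = (Complex.exp (-((k*r:ℝ):ℂ) * Complex.I) - Complex.exp (((k*r:ℝ):ℂ) * Complex.I)) * Complex.I / 2 := rfl
  rw [hs]
  set a := Complex.exp (-((k*r:ℝ):ℂ) * Complex.I)
  set b := Complex.exp (((k*r:ℝ):ℂ) * Complex.I)
  set e := Complex.exp (-Complex.I * k * (x:ℂ))
  linear_combination (e * (a - b)) * Complex.I_mul_I


/-- If `F : ℝ → ℂ` is continuous with compact support and
`f(x) = (1/√(2π)) ∫ F(k) e^{-ikx} dk`, then `f` is differentiable, and for every `x`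
the series `D_Δ(f)(x)` converges for all sufficiently small `Δ > 0`, with sum tending
to `f'(x)` as `Δ → 0⁺`. -/
theorem stmt_1 (F : ℝ → ℂ) (hFc : Continuous F) (hFsupp : HasCompactSupport F)
    (f : ℝ → ℂ)
    (hf : ∀ x : ℝ, f x =
      ((1 / Real.sqrt (2 * Real.pi) : ℝ) : ℂ) *
        ∫ k : ℝ, F k * Complex.exp (-Complex.I * (k : ℂ) * (x : ℂ))) :
    Differentiable ℝ f ∧
    ∀ x : ℝ, ∃ D : ℝ → ℂ,
      (∀ᶠ Δ in nhdsWithin (0 : ℝ) (Set.Ioi 0),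
        Tendsto (fun N : ℕ => ∑ n ∈ Finset.range N,
            (-1 : ℂ) ^ n * (f (x + Δ * ((n : ℝ) + 1)) - f (x - Δ * ((n : ℝ) + 1))) /
              ((Δ * ((n : ℝ) + 1) : ℝ) : ℂ))
          atTop (nhds (D Δ))) ∧
      Tendsto D (nhdsWithin (0 : ℝ) (Set.Ioi 0)) (nhds (deriv f x)) := by
  set c : ℂ := ((1 / Real.sqrt (2 * Real.pi) : ℝ) : ℂ) with hcdef
  have hint : ∀ y : ℝ, Integrable (fun k : ℝ => F k * Complex.exp (-Complex.I * k * y)) := by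
    intro y
    exact Continuous.integrable_of_hasCompactSupport (by continuity) hFsupp.mul_right
  have hint' : ∀ y : ℝ,
      Integrable (fun k : ℝ => F k * Complex.exp (-Complex.I * k * y) * (-Complex.I * k)) := by
    intro y
    exact Continuous.integrable_of_hasCompactSupport (by continuity) hFsupp.mul_right.mul_right
  have hexp1 : ∀ k y : ℝ, ‖Complex.exp (-Complex.I * k * y)‖ = 1 := by
    intro k y
    rw [show -Complex.I * (k:ℂ) * (y:ℂ) = ((-(k*y) : ℝ) : ℂ) * Complex.I by push_cast; ring]
    rw [Complex.norm_exp_ofReal_mul_I]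
  have hder : ∀ y : ℝ, HasDerivAt f
      (c * ∫ k : ℝ, F k * Complex.exp (-Complex.I * k * y) * (-Complex.I * k)) y := by
    intro y
    have key := hasDerivAt_integral_of_dominated_loc_of_deriv_le (s := Metric.ball y 1) (x₀ := y)
        (μ := volume)
        (F := fun (x : ℝ) (k : ℝ) => F k * Complex.exp (-Complex.I * k * x))
        (F' := fun (x : ℝ) (k : ℝ) => F k * Complex.exp (-Complex.I * k * x) * (-Complex.I * k))
        (bound := fun k => ‖F k‖ * |k|)
        (Metric.ball_mem_nhds y one_pos)
        (Eventually.of_forall fun x => (Continuous.aestronglyMeasurable (by continuity)))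
        (hint y)
        (Continuous.aestronglyMeasurable (by continuity))
        (Eventually.of_forall ?_)
        (Continuous.integrable_of_hasCompactSupport (hFc.norm.mul continuous_abs)
          hFsupp.norm.mul_right)
        (Eventually.of_forall ?_)
    · have h2 := key.2
      have hfe : f = fun x : ℝ => c * ∫ k : ℝ, F k * Complex.exp (-Complex.I * k * x) :=
        funext hf
      rw [hfe]
      exact h2.const_mul c
    · intro k x hx
      rw [norm_mul, norm_mul, hexp1 k x, mul_one]
      have h3 : ‖-Complex.I * (k:ℂ)‖ = |k| := by
        rw [norm_mul]
        simp
      rw [h3]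
    · intro k x hx
      have h2 : HasDerivAt (fun z : ℂ => -Complex.I * k * z) (-Complex.I * k) (x:ℂ) := by
        simpa using (hasDerivAt_id (x:ℂ)).const_mul (-Complex.I * (k:ℂ))
      have h4 := ((h2.cexp).const_mul (F k)).comp_ofReal
      exact h4.congr_deriv (by ring)
  refine ⟨fun x => (hder x).differentiableAt, ?_⟩
  intro x
  refine ⟨fun _ => deriv f x, ?_, tendsto_const_nhds⟩
  obtain ⟨R, hR0, hR⟩ := (IsCompact.isBounded hFsupp).subset_closedBall_lt 0 0
  have hFR : ∀ k : ℝ, F k ≠ 0 → |k| ≤ R := by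
    intro k hk
    have h1 : k ∈ tsupport F := subset_tsupport F (Function.mem_support.2 hk)
    have h2 := hR h1
    simpa [Real.dist_eq] using Metric.mem_closedBall.1 h2
  have hmem : Set.Ioc (0:ℝ) (π/(2*R)) ∈ nhdsWithin (0 : ℝ) (Set.Ioi 0) :=
    Ioc_mem_nhdsGT (by positivity)
  filter_upwards [hmem] with Δ hΔ
  obtain ⟨hΔ0, hΔR⟩ := hΔ
  have hΔne : (Δ:ℂ) ≠ 0 := by exact_mod_cast hΔ0.ne'
  have hsmall : ∀ k : ℝ, F k ≠ 0 → |k * Δ| ≤ π/2 := by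
    intro k hk
    have h1 := hFR k hk
    have h2 : (0:ℝ) ≤ |k| := abs_nonneg k
    rw [abs_mul, abs_of_pos hΔ0]
    calc |k| * Δ ≤ R * Δ := by nlinarith
      _ ≤ R * (π/(2*R)) := by nlinarith
      _ = π/2 := by field_simp
  set ψ : ℕ → ℝ → ℂ := fun n k =>
    ((-1:ℂ)^n * c / ((Δ * ((n:ℝ)+1) : ℝ) : ℂ)) *
      (F k * Complex.exp (-Complex.I * k * ((x + Δ * ((n:ℝ)+1) : ℝ) : ℂ))
        - F k * Complex.exp (-Complex.I * k * ((x - Δ * ((n:ℝ)+1) : ℝ) : ℂ))) with hψ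
  have hψint : ∀ n : ℕ, Integrable (ψ n) := fun n =>
    (((hint (x + Δ * ((n:ℝ)+1))).sub (hint (x - Δ * ((n:ℝ)+1)))).const_mul _)
  have hterm : ∀ n : ℕ,
      (-1 : ℂ) ^ n * (f (x + Δ * ((n : ℝ) + 1)) - f (x - Δ * ((n : ℝ) + 1))) /
        ((Δ * ((n : ℝ) + 1) : ℝ) : ℂ) = ∫ k : ℝ, ψ n k := by
    intro n
    rw [hf (x + Δ * ((n:ℝ)+1)), hf (x - Δ * ((n:ℝ)+1)), ← mul_sub,
      ← integral_sub (hint _) (hint _)]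
    simp only [hψ]
    rw [MeasureTheory.integral_const_mul]
    ring
  have hS : ∀ N : ℕ,
      (∑ n ∈ Finset.range N,
        (-1 : ℂ) ^ n * (f (x + Δ * ((n : ℝ) + 1)) - f (x - Δ * ((n : ℝ) + 1))) /
          ((Δ * ((n : ℝ) + 1) : ℝ) : ℂ)) = ∫ k : ℝ, ∑ n ∈ Finset.range N, ψ n k := by
    intro N
    rw [MeasureTheory.integral_finset_sum _ (fun n _ => hψint n)]
    exact Finset.sum_congr rfl fun n _ => hterm n
  have hpt : ∀ (N : ℕ) (k : ℝ), (∑ n ∈ Finset.range N, ψ n k)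
      = (c * (F k * Complex.exp (-Complex.I * k * (x:ℂ))) * (-2*Complex.I/Δ)) *
          ((∑ n ∈ Finset.range N, (-1:ℝ)^n * Real.sin (((n:ℝ)+1) * (k*Δ)) / ((n:ℝ)+1) : ℝ) : ℂ) := by
    intro N k
    rw [Complex.ofReal_sum, Finset.mul_sum]
    apply Finset.sum_congr rfl
    intro n _
    have hn : ((n:ℂ)+1) ≠ 0 := by
      have : (0:ℝ) < (n:ℝ) + 1 := by positivity
      exact_mod_cast this.ne'
    rw [hψ]
    simp only []
    rw [show F k * Complex.exp (-Complex.I * k * ((x + Δ * ((n:ℝ)+1) : ℝ) : ℂ))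
        - F k * Complex.exp (-Complex.I * k * ((x - Δ * ((n:ℝ)+1) : ℝ) : ℂ))
      = F k * (Complex.exp (-Complex.I * k * ((x + Δ * ((n:ℝ)+1) : ℝ) : ℂ))
        - Complex.exp (-Complex.I * k * ((x - Δ * ((n:ℝ)+1) : ℝ) : ℂ))) from (mul_sub _ _ _).symm]
    rw [exp_diff_sin k x (Δ * ((n:ℝ)+1))]
    rw [show ((n:ℝ)+1) * (k*Δ) = k * (Δ * ((n:ℝ)+1)) by ring]
    push_cast
    field_simp
  have hlim : Tendsto (fun N : ℕ => ∫ k : ℝ, ∑ n ∈ Finset.range N, ψ n k) atTop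
      (𝓝 (∫ k : ℝ, c * (F k * Complex.exp (-Complex.I * k * (x:ℂ)) * (-Complex.I * k)))) := by
    apply MeasureTheory.tendsto_integral_of_dominated_convergence
      (bound := fun k => (‖c‖ * (2/Δ) * 3) * ‖F k‖)
    · intro N
      exact (MeasureTheory.integrable_finset_sum _ fun n _ => hψint n).aestronglyMeasurable
    · exact ((hFc.integrable_of_hasCompactSupport hFsupp).norm.const_mul _)
    · intro N
      apply Eventually.of_forall
      intro k
      rw [hpt N k]
      by_cases hFk : F k = 0
      · simp [hFk]
      · have hsb := sin_series_bound (k*Δ) (hsmall k hFk) N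
        have hnorm2 : ‖(-2*Complex.I/(Δ:ℂ))‖ = 2/Δ := by
          rw [norm_div, norm_mul]
          simp [abs_of_pos hΔ0]
        simp only [norm_mul, Complex.norm_real]
        rw [hexp1 k x, hnorm2, mul_one, Real.norm_eq_abs]
        have h1 : (0:ℝ) ≤ ‖c‖ := norm_nonneg _
        have h2 : (0:ℝ) ≤ ‖F k‖ := norm_nonneg _
        have h3 : (0:ℝ) ≤ 2/Δ := by positivity
        have h4 : (0:ℝ) ≤ |∑ n ∈ Finset.range N, (-1:ℝ)^n * Real.sin (((n:ℝ)+1) * (k*Δ)) / ((n:ℝ)+1)| := abs_nonneg _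
        nlinarith [mul_nonneg (mul_nonneg h1 h2) h3, hsb]
    · apply Eventually.of_forall
      intro k
      simp only [funext (hpt · k)]
      by_cases hFk : F k = 0
      · simp [hFk]
      · have hts := sin_series_tendsto (k*Δ) (hsmall k hFk)
        have h2 : Tendsto (fun N : ℕ =>
            ((∑ n ∈ Finset.range N, (-1:ℝ)^n * Real.sin (((n:ℝ)+1) * (k*Δ)) / ((n:ℝ)+1) : ℝ) : ℂ))
            atTop (𝓝 ((k*Δ/2 : ℝ) : ℂ)) := (Complex.continuous_ofReal.tendsto _).comp hts
        have h3 := h2.const_mul (c * (F k * Complex.exp (-Complex.I * k * (x:ℂ))) * (-2*Complex.I/Δ))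
        have heq : c * (F k * Complex.exp (-Complex.I * k * (x:ℂ)) * (-Complex.I * k))
            = (c * (F k * Complex.exp (-Complex.I * k * (x:ℂ))) * (-2*Complex.I/Δ)) * ((k*Δ/2 : ℝ) : ℂ) := by
          push_cast
          field_simp
        rw [heq]
        exact h3
  have hderiv : deriv f x = c * ∫ k : ℝ, F k * Complex.exp (-Complex.I * k * (x:ℂ)) * (-Complex.I * k) :=
    (hder x).deriv
  rw [show (fun N : ℕ => ∑ n ∈ Finset.range N,
      (-1 : ℂ) ^ n * (f (x + Δ * ((n : ℝ) + 1)) - f (x - Δ * ((n : ℝ) + 1))) /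
        ((Δ * ((n : ℝ) + 1) : ℝ) : ℂ)) = fun N : ℕ => ∫ k : ℝ, ∑ n ∈ Finset.range N, ψ n k
    from funext hS]
  rw [hderiv, ← MeasureTheory.integral_const_mul]
  exact hlim
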